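/- Let α, δ : ℂ → ℂ and let B(λ), A(λ) be operators on a vector space satisfying the exchange relation A(μ)B(λ) = f(λ,μ)B(λ)A(μ) + g(μ,λ)B(μ)A(λ) with f(λ,μ) = (λ-μ+1)/(λ-μ) and g(λ,μ) = 1/(λ-μ), together with [B(λ),B(μ)] = 0, and a vector |0⟩ with A(λ)|0⟩ = α(λ)|0⟩. Then for distinct parameters λ, λ₁,...,λ_M, A(λ)B(λ₁)...B(λ_M)|0⟩ = α(λ)∏_{k=1}^M f(λ_k,λ)·B(λ₁)...B(λ_M)|0⟩ + Σ_{i=1}^M Φ_i·B(λ₁)...B(λ_{i-1})B(λ)B(λ_{i+1})...B(λ_M)|0⟩, where Φ_i = α(λ_i)·g(λ,λ_i)·∏_{k≠i} f(λ_k,λ_i). -/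

import Mathlib

/-- XXX structure function `f(λ,μ) = (λ-μ+1)/(λ-μ)`. -/
noncomputable def fXXX (l m : ℂ) : ℂ := (l - m + 1) / (l - m)

/-- XXX structure function `g(λ,μ) = 1/(λ-μ)`. -/
noncomputable def gXXX (l m : ℂ) : ℂ := 1 / (l - m)

lemma fg_id {μ ν l0 : ℂ} (h1 : μ ≠ l0) (h2 : ν ≠ l0) (h3 : μ ≠ ν) :
    gXXX l0 ν * fXXX μ ν = fXXX μ l0 * gXXX l0 ν + gXXX l0 μ * gXXX μ ν := by
  have e1 : μ - l0 ≠ 0 := sub_ne_zero.2 h1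
  have e2 : l0 - ν ≠ 0 := sub_ne_zero.2 (Ne.symm h2)
  have e3 : μ - ν ≠ 0 := sub_ne_zero.2 h3
  have e4 : l0 - μ ≠ 0 := sub_ne_zero.2 h1.symm
  unfold fXXX gXXX
  field_simp
  ring

lemma swapB {V : Type*} [AddCommGroup V] [Module ℂ V] (B : ℂ → Module.End ℂ V)
    (hBB : ∀ l m : ℂ, B l * B m = B m * B l) (a b : ℂ) (L : List ℂ) (j : ℕ)
    (hj : j < L.length) :
    B a * ((L.set j b).map B).prod = B b * ((L.set j a).map B).prod := by
  have hT : ∀ x : ℂ, Commute (B x) ((L.take j).map B).prod := fun x =>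
    Commute.list_prod_right _ _ fun y hy => by
      obtain ⟨z, _, rfl⟩ := List.mem_map.1 hy; exact hBB x z
  rw [List.set_eq_take_cons_drop b hj, List.set_eq_take_cons_drop a hj]
  simp only [List.map_append, List.map_cons, List.prod_append, List.prod_cons]
  set T := ((L.take j).map B).prod with hTdef
  rw [← mul_assoc, (hT a).eq, mul_assoc T, ← mul_assoc (B a), hBB a b, mul_assoc (B b),
    ← mul_assoc T, ← (hT b).eq, mul_assoc (B b)]

lemma prod_erase_zero {M : ℕ} (G : Fin (M + 1) → ℂ) :
    ∏ k ∈ Finset.univ.erase (0 : Fin (M + 1)), G k = ∏ k : Fin M, G k.succ := by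
  rw [Fin.univ_succ, Finset.erase_cons, Finset.prod_map]
  rfl

lemma prod_erase_succ {M : ℕ} (G : Fin (M + 1) → ℂ) (j : Fin M) :
    ∏ k ∈ Finset.univ.erase j.succ, G k = G 0 * ∏ k ∈ Finset.univ.erase j, G k.succ := by
  rw [Fin.univ_succ, Finset.erase_cons_of_ne _ (Fin.succ_ne_zero j).symm,
    Finset.prod_cons,
    show ((Finset.univ.map ⟨Fin.succ, Fin.succ_injective M⟩).erase j.succ)
      = (Finset.univ.erase j).map ⟨Fin.succ, Fin.succ_injective M⟩ from
      (Finset.map_erase _ _ _).symm,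
    Finset.prod_map]
  rfl

lemma ofFn_set {M : ℕ} (f : Fin M → ℂ) (i : Fin M) (x : ℂ) :
    (List.ofFn fun k => if k = i then x else f k) = (List.ofFn f).set i x := by
  apply List.ext_getElem <;>
    simp [List.getElem_set, List.getElem_ofFn, Fin.ext_iff, eq_comm]

lemma prod_eraseIdx_ofFn {M : ℕ} (f : Fin M → ℂ) (i : Fin M) (F : ℂ → ℂ) :
    (((List.ofFn f).eraseIdx ↑i).map F).prod = ∏ k ∈ Finset.univ.erase i, F (f k) := by
  induction M with
  | zero => exact i.elim0
  | succ M ih =>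
    induction i using Fin.cases with
    | zero =>
      rw [List.ofFn_succ, Fin.val_zero, List.eraseIdx_cons_zero, prod_erase_zero,
        List.map_ofFn, List.prod_ofFn]
      rfl
    | succ j =>
      rw [List.ofFn_succ, Fin.val_succ, List.eraseIdx_cons_succ, List.map_cons,
        List.prod_cons, ih (fun k => f k.succ) j, prod_erase_succ]

lemma mainList {V : Type*} [AddCommGroup V] [Module ℂ V]
    (A B : ℂ → Module.End ℂ V) (α : ℂ → ℂ) (v0 : V)
    (hBB : ∀ l m : ℂ, B l * B m = B m * B l)
    (hAB : ∀ l m : ℂ, l ≠ m →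
      A m * B l = fXXX l m • (B l * A m) + gXXX m l • (B m * A l))
    (hA0 : ∀ l : ℂ, A l v0 = α l • v0) :
    ∀ (L : List ℂ), L.Pairwise (· ≠ ·) → ∀ (l0 : ℂ), (∀ x ∈ L, x ≠ l0) →
    A l0 ((L.map B).prod v0)
      = (α l0 * (L.map (fun x => fXXX x l0)).prod) • ((L.map B).prod v0)
        + ∑ i : Fin L.length,
            (α (L.get i) * gXXX l0 (L.get i)
              * (((L.eraseIdx ↑i).map (fun x => fXXX x (L.get i))).prod))
              • (((L.set ↑i l0).map B).prod v0) := by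
  intro L
  induction L with
  | nil => intro _ l0 _; simp [hA0]
  | cons μ L' ih =>
    intro hpw l0 h0
    have hpc := List.pairwise_cons.1 hpw
    have hpw' : L'.Pairwise (· ≠ ·) := hpc.2
    have hμL : ∀ x ∈ L', x ≠ μ := fun x hx => (hpc.1 x hx).symm
    have hμ0 : μ ≠ l0 := h0 μ (by simp)
    have h0' : ∀ x ∈ L', x ≠ l0 := fun x hx => h0 x (by simp [hx])
    have ihA := ih hpw' l0 h0'
    have ihμ := ih hpw' μ hμL
    have hexp : A l0 (((μ :: L').map B).prod v0)
        = fXXX μ l0 • (B μ) (A l0 ((L'.map B).prod v0))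
          + gXXX l0 μ • (B l0) (A μ ((L'.map B).prod v0)) := by
      have h := LinearMap.congr_fun (hAB μ l0 hμ0) ((L'.map B).prod v0)
      simpa [Module.End.mul_apply] using h
    rw [hexp, ihA, ihμ]
    simp only [map_add, map_smul, map_sum, smul_add, smul_smul, Finset.smul_sum,
      List.map_cons, List.prod_cons, Module.End.mul_apply, List.length_cons,
      Fin.sum_univ_succ, List.get_cons_zero, List.get_cons_succ, Fin.val_zero,
      Fin.val_succ, List.eraseIdx_cons_zero, List.eraseIdx_cons_succ,
      List.set_cons_zero, List.set_cons_succ,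
      show ∀ x : Fin L'.length, (μ :: L').get x.succ = L'.get x from fun x => rfl,
      show ∀ x : Fin L'.length,
          (B l0) ((List.map B (L'.set (↑x) μ)).prod v0)
            = (B μ) ((List.map B (L'.set (↑x) l0)).prod v0) from fun x => by
        simpa [Module.End.mul_apply] using
          LinearMap.congr_fun (swapB B hBB l0 μ L' ↑x x.isLt) v0]
    have hS :
        (∑ x : Fin L'.length,
          (fXXX μ l0 *
              (α (L'.get x) * gXXX l0 (L'.get x)
                * (List.map (fun y => fXXX y (L'.get x)) (L'.eraseIdx ↑x)).prod)) •
            (B μ) ((List.map B (L'.set (↑x) l0)).prod v0))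
        + (∑ x : Fin L'.length,
          (gXXX l0 μ *
              (α (L'.get x) * gXXX μ (L'.get x)
                * (List.map (fun y => fXXX y (L'.get x)) (L'.eraseIdx ↑x)).prod)) •
            (B μ) ((List.map B (L'.set (↑x) l0)).prod v0))
        = ∑ x : Fin L'.length,
          (α (L'.get x) * gXXX l0 (L'.get x) *
              (fXXX μ (L'.get x) *
                (List.map (fun y => fXXX y (L'.get x)) (L'.eraseIdx ↑x)).prod)) •
            (B μ) ((List.map B (L'.set (↑x) l0)).prod v0) := by
      rw [← Finset.sum_add_distrib]
      refine Finset.sum_congr rfl fun x _ => ?_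
      rw [← add_smul]
      congr 1
      have hν0 : L'.get x ≠ l0 := h0' _ (L'.get_mem _)
      have hμν : μ ≠ L'.get x := hpc.1 _ (L'.get_mem _)
      linear_combination
        -(α (L'.get x) * (List.map (fun y => fXXX y (L'.get x)) (L'.eraseIdx ↑x)).prod)
          * (fg_id hμ0 hν0 hμν)
    linear_combination (norm := module) hS

/-- action of `A(λ)` on a product of `B`-operators applied to the
pseudovacuum (the key step of the algebraic Bethe ansatz). -/
theorem A_on_Bethe_vector {V : Type*} [AddCommGroup V] [Module ℂ V]
    (A B : ℂ → Module.End ℂ V) (α : ℂ → ℂ) (v0 : V)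
    (hBB : ∀ l m : ℂ, B l * B m = B m * B l)
    (hAB : ∀ l m : ℂ, l ≠ m →
      A m * B l = fXXX l m • (B l * A m) + gXXX m l • (B m * A l))
    (hA0 : ∀ l : ℂ, A l v0 = α l • v0)
    (M : ℕ) (lam : Fin M → ℂ) (l0 : ℂ)
    (hdist : ∀ i j, i ≠ j → lam i ≠ lam j) (hl0 : ∀ i, lam i ≠ l0) :
    A l0 ((List.ofFn fun i => B (lam i)).prod v0)
      = (α l0 * ∏ k, fXXX (lam k) l0) • ((List.ofFn fun i => B (lam i)).prod v0)
        + ∑ i, (α (lam i) * gXXX l0 (lam i)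
              * ∏ k ∈ Finset.univ.erase i, fXXX (lam k) (lam i)) •
            ((List.ofFn fun k => B (if k = i then l0 else lam k)).prod v0) := by
  have hlen : (List.ofFn lam).length = M := List.length_ofFn
  have hpw : (List.ofFn lam).Pairwise (· ≠ ·) := by
    rw [List.pairwise_ofFn]
    exact fun i j hij => hdist i j hij.ne
  have hmem : ∀ x ∈ List.ofFn lam, x ≠ l0 := by
    intro x hx
    obtain ⟨i, rfl⟩ := List.mem_ofFn.1 hx
    exact hl0 i
  have key := mainList A B α v0 hBB hAB hA0 (List.ofFn lam) hpw l0 hmem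
  have hmapB : (List.ofFn lam).map B = (List.ofFn fun i => B (lam i)) := by
    rw [List.map_ofFn]; rfl
  rw [hmapB] at key
  rw [key]
  congr 1
  · congr 2
    rw [List.map_ofFn, List.prod_ofFn]; rfl
  · refine Fintype.sum_equiv (finCongr hlen) _ _ fun i => ?_
    set i' : Fin M := finCongr hlen i with hi'
    have hget : (List.ofFn lam).get i = lam i' := by
      rw [List.get_ofFn]; rfl
    have hval : (↑i : ℕ) = ↑i' := rfl
    rw [hget, hval]
    congr 1
    · congr 1
      exact prod_eraseIdx_ofFn lam i' (fun x => fXXX x (lam i'))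
    · congr 1
      rw [← ofFn_set, List.map_ofFn]; rfl
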